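/- Let Ω and Θ be finite sets with |Ω| ≥ 3 and |Θ| ≥ 2, and let φ : Δ(Ω×Θ) → Δ(Ω×Θ) satisfy positivity, continuity, weak signal coherence, and marginality. Then there exists ψ : Ω → ℝ₊₊ such that: (i) for all p ∈ Δ(Ω×Θ) and all ω ∈ Ω, the Ω-marginal satisfies φ(p)(ω) = ψ(ω)·p(ω) / Σ_{ω'} ψ(ω')·p(ω'), where p(ω) = Σ_θ p(ω,θ); and (ii) for all θ ∈ Θ with p(θ) > 0 and all ω ∈ Ω, φ(p)(ω,θ) / φ(p)(θ) = ψ(ω)·p(ω,θ) / Σ_{ω'} ψ(ω')·p(ω',θ), where p(θ) = Σ_ω p(ω,θ) and φ(p)(θ) = Σ_ω φ(p)(ω,θ). -/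

import Mathlib

set_option linter.unusedSectionVars false
set_option linter.unreachableTactic false
set_option linter.unusedTactic false
set_option maxHeartbeats 1000000


open Finset

/-- `p` is a probability distribution on the finite set `α`. -/
def IsDist {α : Type*} [Fintype α] (p : α → ℝ) : Prop :=
  (∀ a, 0 ≤ p a) ∧ ∑ a, p a = 1

/-- The conditional `p(·|θ)` of a joint distribution `p ∈ Δ(Ω×Θ)` given signal `θ`. -/
noncomputable def condSignal {Ω Θ : Type*} [Fintype Ω] [DecidableEq Θ]
    (p : Ω × Θ → ℝ) (θ : Θ) : Ω × Θ → ℝ :=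
  fun x => if x.2 = θ then p x / ∑ ω, p (ω, θ) else 0

/-- `φ` is positive: `φ(p)(A) = 0` iff `p(A) = 0` for every event `A ⊆ Ω×Θ`. -/
def PositiveJoint {Ω Θ : Type*} [Fintype Ω] [Fintype Θ]
    (φ : (Ω × Θ → ℝ) → Ω × Θ → ℝ) : Prop :=
  ∀ p, IsDist p → ∀ A : Finset (Ω × Θ), (∑ x ∈ A, φ p x = 0 ↔ ∑ x ∈ A, p x = 0)

/-- `φ` is weakly signal coherent: for every `θ` with `p(θ) > 0`,
`φ(p(·|θ)) = φ(p)(·|θ)`. -/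
def WeakSignalCoherent {Ω Θ : Type*} [Fintype Ω] [Fintype Θ] [DecidableEq Θ]
    (φ : (Ω × Θ → ℝ) → Ω × Θ → ℝ) : Prop :=
  ∀ p, IsDist p → ∀ θ : Θ, 0 < ∑ ω, p (ω, θ) →
    φ (condSignal p θ) = condSignal (φ p) θ

/-- `φ` satisfies marginality: distributions with equal `Ω`-marginals are mapped to
distributions with equal `Ω`-marginals. -/
def Marginality {Ω Θ : Type*} [Fintype Ω] [Fintype Θ]
    (φ : (Ω × Θ → ℝ) → Ω × Θ → ℝ) : Prop :=
  ∀ p p', IsDist p → IsDist p' →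
    (∀ ω : Ω, ∑ θ, p (ω, θ) = ∑ θ, p' (ω, θ)) →
    ∀ ω : Ω, ∑ θ, φ p (ω, θ) = ∑ θ, φ p' (ω, θ)

section Simplex

variable {Ω : Type*} [Fintype Ω] [DecidableEq Ω]

def ep (i j : Ω) (a : ℝ) : Ω → ℝ := fun ω => if ω = i then a else if ω = j then 1 - a else 0

lemma ep_apply_i {i j : Ω} (a : ℝ) : ep i j a i = a := by simp [ep]

lemma ep_apply_j {i j : Ω} (hij : i ≠ j) (a : ℝ) : ep i j a j = 1 - a := by
  simp [ep, hij.symm]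

lemma ep_apply_other {i j ω : Ω} (hω : ω ≠ i) (hω' : ω ≠ j) (a : ℝ) : ep i j a ω = 0 := by
  simp [ep, hω, hω']

lemma ep_symm {i j : Ω} (hij : i ≠ j) (a : ℝ) : ep i j a = ep j i (1 - a) := by
  funext ω
  by_cases h1 : ω = i <;> by_cases h2 : ω = j <;> simp_all [ep, hij] <;> ring

lemma ep_isDist {i j : Ω} (hij : i ≠ j) {a : ℝ} (h0 : 0 ≤ a) (h1 : a ≤ 1) :
    IsDist (ep i j a) := by
  constructor
  · intro ω
    unfold ep
    split_ifs <;> linarith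
  · have : (ep i j a : Ω → ℝ) = fun ω => (if ω = i then a else 0) + (if ω = j then (1-a) else 0) := by
      funext ω
      by_cases h1 : ω = i <;> by_cases h2 : ω = j <;> simp_all [ep, hij]
    rw [this, Finset.sum_add_distrib]
    simp [Finset.sum_ite_eq']

lemma isDist_sum_pair_lt {q : Ω → ℝ} (hq : IsDist q) {i j k : Ω} (hik : i ≠ k) (hjk : j ≠ k)
    (hij : i ≠ j) (hk : 0 < q k) : q i + q j < 1 := by
  have hsub : ({i, j, k} : Finset Ω) ⊆ univ := Finset.subset_univ _
  have hsum : ∑ ω ∈ ({i, j, k} : Finset Ω), q ω ≤ ∑ ω, q ω :=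
    Finset.sum_le_sum_of_subset_of_nonneg hsub (fun ω _ _ => hq.1 ω)
  rw [Finset.sum_insert (by simp [hij, hik]), Finset.sum_insert (by simp [hjk]),
    Finset.sum_singleton, hq.2] at hsum
  linarith

variable (F : (Ω → ℝ) → Ω → ℝ)

/-- the edge distortion ratio function. -/
noncomputable def gg (i j : Ω) (x : ℝ) : ℝ :=
  F (ep i j (x / (1 + x))) i / F (ep i j (x / (1 + x))) j



lemma F_pos (hmapF : ∀ q, IsDist q → IsDist (F q))
    (hposF : ∀ q, IsDist q → ∀ ω, (F q ω = 0 ↔ q ω = 0))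
    {q : Ω → ℝ} (hq : IsDist q) {ω : Ω} (h : 0 < q ω) : 0 < F q ω := by
  rcases lt_or_eq_of_le ((hmapF q hq).1 ω) with h' | h'
  · exact h'
  · exact absurd ((hposF q hq ω).1 h'.symm) (by linarith)

lemma gg_pos (hmapF : ∀ q, IsDist q → IsDist (F q))
    (hposF : ∀ q, IsDist q → ∀ ω, (F q ω = 0 ↔ q ω = 0))
    {i j : Ω} (hij : i ≠ j) {x : ℝ} (hx : 0 < x) : 0 < gg F i j x := by
  have h1x : 0 < 1 + x := by linarith
  have ha0 : 0 < x / (1 + x) := by positivity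
  have ha1 : x / (1 + x) < 1 := by rw [div_lt_one h1x]; linarith
  have hd : IsDist (ep i j (x / (1+x))) := ep_isDist hij (le_of_lt ha0) (by linarith)
  apply div_pos
  · exact F_pos F hmapF hposF hd (by rw [ep_apply_i]; exact ha0)
  · exact F_pos F hmapF hposF hd (by rw [ep_apply_j hij]; linarith)

/-- Step A : the interior pairwise ratio is given by the edge ratio function. -/
lemma stepA (hmapF : ∀ q, IsDist q → IsDist (F q))
    (hposF : ∀ q, IsDist q → ∀ ω, (F q ω = 0 ↔ q ω = 0))
    (hmix : ∀ q1 q2, IsDist q1 → IsDist q2 → ∀ l : ℝ, 0 < l → l < 1 →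
      ∃ μ, 0 < μ ∧ μ < 1 ∧ ∀ ω, F (fun ω => l * q1 ω + (1-l) * q2 ω) ω
        = μ * F q1 ω + (1-μ) * F q2 ω)
    {q : Ω → ℝ} (hq : IsDist q) {i j : Ω} (hij : i ≠ j)
    (hi : 0 < q i) (hj : 0 < q j) (hlt : q i + q j < 1) :
    F q i / F q j = gg F i j (q i / q j) := by
  set c := q i + q j with hc
  have hc0 : 0 < c := by linarith
  have hc1 : c < 1 := hlt
  have h1c : (0:ℝ) < 1 - c := by linarith
  set r := ep i j (q i / c) with hr
  have hrd : IsDist r := ep_isDist hij (by positivity) (by rw [div_le_one hc0]; linarith)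
  set s : Ω → ℝ := fun ω => if ω = i ∨ ω = j then 0 else q ω / (1 - c) with hs
  have hsi : s i = 0 := by simp [hs]
  have hsj : s j = 0 := by simp [hs]
  have hsd : IsDist s := by
    constructor
    · intro ω
      simp only [hs]
      split_ifs with h
      · exact le_refl 0
      · have := hq.1 ω
        positivity
    · have e1 : ∀ ω, (if ω = i ∨ ω = j then (0:ℝ) else q ω)
          = q ω - ((if ω = i then q i else 0) + (if ω = j then q j else 0)) := by
        intro ω
        by_cases h1 : ω = i
        · subst h1; simp [hij]
        · by_cases h2 : ω = j
          · subst h2; simp [h1]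
          · simp [h1, h2]
      have e2 : ∀ ω, s ω = (if ω = i ∨ ω = j then (0:ℝ) else q ω) / (1 - c) := by
        intro ω
        simp only [hs]
        split_ifs with h
        · simp
        · rfl
      have e3 : ∑ ω, (if ω = i ∨ ω = j then (0:ℝ) else q ω) = 1 - c := by
        rw [Finset.sum_congr rfl (fun ω _ => e1 ω), Finset.sum_sub_distrib,
          Finset.sum_add_distrib, hq.2]
        simp [Finset.sum_ite_eq', hc]
      calc ∑ ω, s ω = (∑ ω, (if ω = i ∨ ω = j then (0:ℝ) else q ω)) / (1-c) := by
            rw [Finset.sum_congr rfl (fun ω _ => e2 ω), Finset.sum_div]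
      _ = 1 := by rw [e3]; field_simp
  have hqeq : q = fun ω => c * r ω + (1 - c) * s ω := by
    funext ω
    by_cases h1 : ω = i
    · subst h1
      rw [hsi, hr, ep_apply_i, mul_div_cancel₀ _ (ne_of_gt hc0)]
      ring
    · by_cases h2 : ω = j
      · subst h2
        rw [hsj, hr, ep_apply_j hij]
        field_simp
        rw [hc]; ring
      · have : s ω = q ω / (1 - c) := by simp [hs, h1, h2]
        rw [this, hr, ep_apply_other h1 h2, mul_div_cancel₀ _ (ne_of_gt h1c)]
        ring
  obtain ⟨μ, hμ0, hμ1, hμ⟩ := hmix r s hrd hsd c hc0 hc1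
  have hFi : F q i = μ * F r i := by
    rw [hqeq, hμ i]
    have : F s i = 0 := (hposF s hsd i).2 hsi
    rw [this]; ring
  have hFj : F q j = μ * F r j := by
    rw [hqeq, hμ j]
    have : F s j = 0 := (hposF s hsd j).2 hsj
    rw [this]; ring
  have hrj : 0 < F r j := F_pos F hmapF hposF hrd (by
    rw [hr, ep_apply_j hij]
    have : q i / c < 1 := by rw [div_lt_one hc0]; linarith
    linarith)
  have harg : (q i / q j) / (1 + q i / q j) = q i / c := by
    rw [hc]
    field_simp
    ring
  have : gg F i j (q i / q j) = F r i / F r j := by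
    rw [gg, harg, hr]
  rw [this, hFi, hFj, mul_div_mul_left _ _ (ne_of_gt hμ0)]

def tri (i j k : Ω) (a b : ℝ) : Ω → ℝ :=
  fun ω => if ω = i then a else if ω = j then b else if ω = k then 1 - a - b else 0

lemma tri_apply_i {i j k : Ω} (a b : ℝ) : tri i j k a b i = a := by simp [tri]

lemma tri_apply_j {i j k : Ω} (hij : i ≠ j) (a b : ℝ) : tri i j k a b j = b := by
  simp [tri, hij.symm]

lemma tri_apply_k {i j k : Ω} (hik : i ≠ k) (hjk : j ≠ k) (a b : ℝ) :
    tri i j k a b k = 1 - a - b := by simp [tri, hik.symm, hjk.symm]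

lemma tri_isDist {i j k : Ω} (hij : i ≠ j) (hik : i ≠ k) (hjk : j ≠ k)
    {a b : ℝ} (ha : 0 ≤ a) (hb : 0 ≤ b) (hab : a + b ≤ 1) : IsDist (tri i j k a b) := by
  constructor
  · intro ω
    unfold tri
    split_ifs <;> linarith
  · have : (tri i j k a b : Ω → ℝ) = fun ω =>
        (if ω = i then a else 0) + (if ω = j then b else 0) + (if ω = k then 1-a-b else 0) := by
      funext ω
      by_cases h1 : ω = i <;> by_cases h2 : ω = j <;> by_cases h3 : ω = k <;>
        simp_all [tri, hij, hik, hjk]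
    rw [this, Finset.sum_add_distrib, Finset.sum_add_distrib]
    simp [Finset.sum_ite_eq']

/-- Step B : the cocycle identity. -/
lemma cocycle (hmapF : ∀ q, IsDist q → IsDist (F q))
    (hposF : ∀ q, IsDist q → ∀ ω, (F q ω = 0 ↔ q ω = 0))
    (hmix : ∀ q1 q2, IsDist q1 → IsDist q2 → ∀ l : ℝ, 0 < l → l < 1 →
      ∃ μ, 0 < μ ∧ μ < 1 ∧ ∀ ω, F (fun ω => l * q1 ω + (1-l) * q2 ω) ω
        = μ * F q1 ω + (1-μ) * F q2 ω)
    {i j k : Ω} (hij : i ≠ j) (hik : i ≠ k) (hjk : j ≠ k)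
    {s t : ℝ} (hs : 0 < s) (ht : 0 < t) :
    gg F i k (s * t) = gg F i j s * gg F j k t := by
  set Z := s * t + t + 1 with hZ
  have hZ0 : 0 < Z := by positivity
  set q := tri i j k (s*t/Z) (t/Z) with hq
  have hqi : q i = s*t/Z := tri_apply_i _ _
  have hqj : q j = t/Z := tri_apply_j hij _ _
  have hqk : q k = 1/Z := by
    rw [hq, tri_apply_k hik hjk]
    field_simp
    rw [hZ]
    ring
  have hi0 : 0 < q i := by rw [hqi]; positivity
  have hj0 : 0 < q j := by rw [hqj]; positivity
  have hk0 : 0 < q k := by rw [hqk]; positivity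
  have hqd : IsDist q := by
    apply tri_isDist hij hik hjk (by positivity) (by positivity)
    rw [← add_div, div_le_one hZ0]
    linarith
  have hij' : F q i / F q j = gg F i j s := by
    rw [stepA F hmapF hposF hmix hqd hij hi0 hj0
      (isDist_sum_pair_lt hqd hik hjk hij hk0)]
    congr 1
    rw [hqi, hqj]
    field_simp
  have hjk' : F q j / F q k = gg F j k t := by
    rw [stepA F hmapF hposF hmix hqd hjk hj0 hk0
      (isDist_sum_pair_lt hqd (Ne.symm hij) (Ne.symm hik) hjk hi0)]
    congr 1
    rw [hqj, hqk]
    field_simp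
  have hik' : F q i / F q k = gg F i k (s*t) := by
    rw [stepA F hmapF hposF hmix hqd hik hi0 hk0
      (isDist_sum_pair_lt hqd hij (Ne.symm hjk) hik hj0)]
    congr 1
    rw [hqi, hqk]
    field_simp
  have hFj0 : 0 < F q j := F_pos F hmapF hposF hqd hj0
  have hFk0 : 0 < F q k := F_pos F hmapF hposF hqd hk0
  rw [← hij', ← hjk', ← hik']
  field_simp

section Wlemmas

variable (hmapF : ∀ q, IsDist q → IsDist (F q))
  (hposF : ∀ q, IsDist q → ∀ ω, (F q ω = 0 ↔ q ω = 0))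
  (hmix : ∀ q1 q2, IsDist q1 → IsDist q2 → ∀ l : ℝ, 0 < l → l < 1 →
    ∃ μ, 0 < μ ∧ μ < 1 ∧ ∀ ω, F (fun ω => l * q1 ω + (1-l) * q2 ω) ω
      = μ * F q1 ω + (1-μ) * F q2 ω)
  {i j k : Ω} (hij : i ≠ j) (hik : i ≠ k) (hjk : j ≠ k)

include hmapF hposF hmix hij hik hjk

/-- multiplicativity of the normalized ratio function. -/
lemma gg_mul {x y : ℝ} (hx : 0 < x) (hy : 0 < y) :
    gg F i j (x * y) * gg F i j 1 = gg F i j x * gg F i j y := by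
  have e1 : gg F i j (x * y) = gg F i k x * gg F k j y :=
    cocycle F hmapF hposF hmix hik hij (Ne.symm hjk) hx hy
  have e2 : gg F i k x = gg F i j x * gg F j k 1 := by
    have := cocycle F hmapF hposF hmix hij hik hjk hx one_pos
    rwa [mul_one] at this
  have e3 : gg F k j y = gg F k i 1 * gg F i j y := by
    have := cocycle F hmapF hposF hmix (Ne.symm hik) (Ne.symm hjk) hij one_pos hy
    rwa [one_mul] at this
  have e4 : gg F i j 1 * (gg F j k 1 * gg F k i 1) = 1 := by
    have h1 : gg F i j (1 * 1) = gg F i k 1 * gg F k j 1 :=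
      cocycle F hmapF hposF hmix hik hij (Ne.symm hjk) one_pos one_pos
    have h2 : gg F i k 1 = gg F i j 1 * gg F j k 1 := by
      have := cocycle F hmapF hposF hmix hij hik hjk one_pos one_pos
      rwa [mul_one] at this
    have h3 : gg F k j 1 = gg F k i 1 * gg F i j 1 := by
      have := cocycle F hmapF hposF hmix (Ne.symm hik) (Ne.symm hjk) hij one_pos one_pos
      rwa [one_mul] at this
    have hg : 0 < gg F i j 1 := gg_pos F hmapF hposF hij one_pos
    rw [mul_one, h2, h3] at h1
    have expand : gg F i j 1 * (gg F i j 1 * (gg F j k 1 * gg F k i 1))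
        = gg F i j 1 * gg F j k 1 * (gg F k i 1 * gg F i j 1) := by ring
    have h4 : gg F i j 1 * (gg F i j 1 * (gg F j k 1 * gg F k i 1)) = gg F i j 1 * 1 := by
      rw [expand, ← h1, mul_one]
    exact mul_left_cancel₀ (ne_of_gt hg) h4
  calc gg F i j (x * y) * gg F i j 1
      = gg F i j x * gg F i j y * (gg F i j 1 * (gg F j k 1 * gg F k i 1)) := by
        rw [e1, e2, e3]; ring
    _ = gg F i j x * gg F i j y := by rw [e4, mul_one]

/-- changing the pair `(i,j)` to `(j,k)` rescales the ratio function. -/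
lemma gg_pair {x : ℝ} (hx : 0 < x) :
    gg F j k x * gg F i j 1 = gg F j k 1 * gg F i j x := by
  have h1 : gg F i k (x * 1) = gg F i j x * gg F j k 1 :=
    cocycle F hmapF hposF hmix hij hik hjk hx one_pos
  have h2 : gg F i k (1 * x) = gg F i j 1 * gg F j k x :=
    cocycle F hmapF hposF hmix hij hik hjk one_pos hx
  rw [mul_one] at h1
  rw [one_mul] at h2
  linear_combination (-1 : ℝ) * (h1.symm.trans h2)

/-- Step D : the normalized ratio function satisfies `W(l) + W(1-l) = 1`. -/
lemma stepD {l : ℝ} (hl0 : 0 < l) (hl1 : l < 1) :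
    gg F i j l / gg F i j 1 + gg F i j (1 - l) / gg F i j 1 = 1 := by
  have hg1 : 0 < gg F i j 1 := gg_pos F hmapF hposF hij one_pos
  set q1 := ep i j (1/2) with hq1
  set q2 := ep j k (1/2) with hq2
  have hq1d : IsDist q1 := ep_isDist hij (by norm_num) (by norm_num)
  have hq2d : IsDist q2 := ep_isDist hjk (by norm_num) (by norm_num)
  set z : Ω → ℝ := fun ω => (1 - l) * q1 ω + (1 - (1 - l)) * q2 ω with hz
  have hzd : IsDist z := by
    constructor
    · intro ω
      have := hq1d.1 ω; have := hq2d.1 ω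
      have h1 : (0:ℝ) ≤ 1 - l := by linarith
      simp only [hz]
      nlinarith
    · simp only [hz]
      rw [Finset.sum_add_distrib, ← Finset.mul_sum, ← Finset.mul_sum, hq1d.2, hq2d.2]
      ring
  have hq1i : q1 i = 1/2 := ep_apply_i _
  have hq1j : q1 j = 1/2 := by rw [hq1, ep_apply_j hij]; norm_num
  have hq1k : q1 k = 0 := ep_apply_other (Ne.symm hik) (Ne.symm hjk) _
  have hq2i : q2 i = 0 := ep_apply_other hij hik _
  have hq2j : q2 j = 1/2 := ep_apply_i _
  have hq2k : q2 k = 1/2 := by rw [hq2, ep_apply_j hjk]; norm_num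
  have hzi : z i = (1 - l)/2 := by simp only [hz]; rw [hq1i, hq2i]; ring
  have hzj : z j = 1/2 := by simp only [hz]; rw [hq1j, hq2j]; ring
  have hzk : z k = l/2 := by simp only [hz]; rw [hq1k, hq2k]; ring
  have hzi0 : 0 < z i := by rw [hzi]; linarith
  have hzj0 : 0 < z j := by rw [hzj]; norm_num
  have hzk0 : 0 < z k := by rw [hzk]; linarith
  obtain ⟨μ, hμ0, hμ1, hμ⟩ := hmix q1 q2 hq1d hq2d (1 - l) (by linarith) (by linarith)
  have h1μ : (0:ℝ) < 1 - μ := by linarith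
  set A := F q1 i with hA
  set B := F q1 j with hB
  set C := F q2 j with hC
  set D := F q2 k with hD
  have hA0 : 0 < A := F_pos F hmapF hposF hq1d (by rw [hq1i]; norm_num)
  have hB0 : 0 < B := F_pos F hmapF hposF hq1d (by rw [hq1j]; norm_num)
  have hC0 : 0 < C := F_pos F hmapF hposF hq2d (by rw [hq2j]; norm_num)
  have hD0 : 0 < D := F_pos F hmapF hposF hq2d (by rw [hq2k]; norm_num)
  have hgg1 : gg F i j 1 = A / B := by
    rw [gg, hA, hB, hq1]
    norm_num
  have hgg2 : gg F j k 1 = C / D := by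
    rw [gg, hC, hD, hq2]
    norm_num
  have hFzi : F z i = μ * A := by
    rw [hz, hμ i]
    have : F q2 i = 0 := (hposF q2 hq2d i).2 hq2i
    rw [this, ← hA]; ring
  have hFzj : F z j = μ * B + (1 - μ) * C := by rw [hz, hμ j, ← hB, ← hC]
  have hFzk : F z k = (1 - μ) * D := by
    rw [hz, hμ k]
    have : F q1 k = 0 := (hposF q1 hq1d k).2 hq1k
    rw [this, ← hD]; ring
  have hden0 : 0 < μ * B + (1 - μ) * C := by positivity
  -- Equation 1 : pair (i,j)
  have eq1 : gg F i j (1 - l) = μ * A / (μ * B + (1 - μ) * C) := by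
    have hr : z i / z j = 1 - l := by rw [hzi, hzj]; field_simp
    have h := stepA F hmapF hposF hmix hzd hij hzi0 hzj0
      (isDist_sum_pair_lt hzd hik hjk hij hzk0)
    rw [hr, hFzi, hFzj] at h
    exact h.symm
  -- Equation 2 : pair (j,k)
  have eq2 : gg F j k (1/l) = (μ * B + (1 - μ) * C) / ((1 - μ) * D) := by
    have hr : z j / z k = 1/l := by
      rw [hzj, hzk]
      field_simp
    have h := stepA F hmapF hposF hmix hzd hjk hzj0 hzk0
      (isDist_sum_pair_lt hzd (Ne.symm hij) (Ne.symm hik) hjk hzi0)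
    rw [hr, hFzj, hFzk] at h
    exact h.symm
  have hW1 : gg F i j (1 - l) / gg F i j 1 = μ * B / (μ * B + (1 - μ) * C) := by
    have hAg : A = gg F i j 1 * B := by rw [hgg1]; field_simp
    rw [eq1, hAg]
    field_simp
  have hW2 : gg F i j (1/l) / gg F i j 1 = (μ * B + (1 - μ) * C) / ((1 - μ) * C) := by
    have hp := gg_pair F hmapF hposF hmix hij hik hjk (x := 1/l) (by positivity)
    have hgjk1 : 0 < gg F j k 1 := gg_pos F hmapF hposF hjk one_pos
    have key : gg F i j (1/l) / gg F i j 1 = gg F j k (1/l) / gg F j k 1 := by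
      rw [div_eq_div_iff (ne_of_gt hg1) (ne_of_gt hgjk1)]
      linear_combination (-1 : ℝ) * hp
    have hCD : C = gg F j k 1 * D := by rw [hgg2]; field_simp
    rw [key, eq2, hCD]
    field_simp
  have hWinv : gg F i j l / gg F i j 1 * (gg F i j (1/l) / gg F i j 1) = 1 := by
    have hm := gg_mul F hmapF hposF hmix hij hik hjk hl0 (y := 1/l) (by positivity)
    have hll : l * (1/l) = 1 := by field_simp
    rw [hll] at hm
    rw [div_mul_div_comm, ← hm]
    field_simp
  have hWl : gg F i j l / gg F i j 1 = (1 - μ) * C / (μ * B + (1 - μ) * C) := by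
    rw [hW2] at hWinv
    have hc0 : (0:ℝ) < (1 - μ) * C := by positivity
    have h2 : gg F i j l / gg F i j 1
        = ((1 - μ) * C) / (μ * B + (1 - μ) * C) * (gg F i j l / gg F i j 1
          * ((μ * B + (1 - μ) * C) / ((1 - μ) * C))) := by
      field_simp
    rw [h2, hWinv, mul_one]
  rw [hWl, hW1, ← add_div, div_eq_one_iff_eq (ne_of_gt hden0)]
  ring

variable (hcontF : ContinuousOn F {q | IsDist q})

/-- W is multiplicative. -/
lemma Wmul {x y : ℝ} (hx : 0 < x) (hy : 0 < y) :
    gg F i j (x * y) / gg F i j 1 = (gg F i j x / gg F i j 1) * (gg F i j y / gg F i j 1) := by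
  have hg1 : 0 < gg F i j 1 := gg_pos F hmapF hposF hij one_pos
  have hm := gg_mul F hmapF hposF hmix hij hik hjk hx hy
  rw [div_mul_div_comm, ← hm]
  field_simp

/-- W is the identity on positive naturals. -/
lemma Wnat : ∀ n : ℕ, 1 ≤ n → gg F i j (n : ℝ) / gg F i j 1 = (n : ℝ) := by
  have hg1 : 0 < gg F i j 1 := gg_pos F hmapF hposF hij one_pos
  intro n
  induction n with
  | zero => intro h; omega
  | succ m ih =>
    intro _
    rcases Nat.eq_zero_or_pos m with hm | hm
    · subst hm
      norm_num
      exact ne_of_gt hg1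
    · have ihm : gg F i j (m : ℝ) / gg F i j 1 = (m : ℝ) := ih hm
      have hm0 : (0:ℝ) < m := by exact_mod_cast hm
      have hm10 : (0:ℝ) < (m:ℝ) + 1 := by linarith
      have hl0 : (0:ℝ) < 1/((m:ℝ)+1) := by positivity
      have hl1 : 1/((m:ℝ)+1) < 1 := by
        rw [div_lt_one hm10]; linarith
      have hsum := stepD F hmapF hposF hmix hij hik hjk hl0 hl1
      have h1m : (1:ℝ) - 1/((m:ℝ)+1) = (m:ℝ) * (1/((m:ℝ)+1)) := by
        field_simp
        ring
      rw [h1m, Wmul F hmapF hposF hmix hij hik hjk hm0 hl0, ihm] at hsum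
      -- hsum : W(1/(m+1)) + m * W(1/(m+1)) = 1
      have hWinv : gg F i j (1/((m:ℝ)+1)) / gg F i j 1 = 1/((m:ℝ)+1) := by
        have : (gg F i j (1/((m:ℝ)+1)) / gg F i j 1) * (1 + (m:ℝ)) = 1 := by
          linarith [hsum]
        field_simp at this ⊢
        linarith [this]
      have hprod : ((m:ℝ)+1) * (1/((m:ℝ)+1)) = 1 := by field_simp
      have := Wmul F hmapF hposF hmix hij hik hjk (x := (m:ℝ)+1) (y := 1/((m:ℝ)+1))
        hm10 hl0
      rw [hprod, hWinv] at this
      have hW1 : gg F i j (1:ℝ) / gg F i j 1 = 1 := by field_simp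
      rw [hW1] at this
      have hne : (1:ℝ)/((m:ℝ)+1) ≠ 0 := by positivity
      push_cast
      rw [div_eq_iff (ne_of_gt hg1)]
      field_simp at this
      linarith [this]

/-- W is the identity on positive rationals. -/
lemma Wrat {a b : ℕ} (ha : 1 ≤ a) (hb : 1 ≤ b) :
    gg F i j ((a : ℝ)/(b : ℝ)) / gg F i j 1 = (a : ℝ)/(b : ℝ) := by
  have ha0 : (0:ℝ) < a := by exact_mod_cast ha
  have hb0 : (0:ℝ) < b := by exact_mod_cast hb
  have hWa := Wnat F hmapF hposF hmix hij hik hjk a ha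
  have hWb := Wnat F hmapF hposF hmix hij hik hjk b hb
  have hprod : ((a:ℝ)/(b:ℝ)) * (b:ℝ) = (a:ℝ) := by field_simp
  have := Wmul F hmapF hposF hmix hij hik hjk (x := (a:ℝ)/(b:ℝ)) (y := (b:ℝ))
    (by positivity) hb0
  rw [hprod, hWa, hWb] at this
  rw [eq_div_iff (ne_of_gt hb0)]
  linarith [this]

include hcontF in
/-- continuity of the edge ratio function. -/
lemma gg_cont : ContinuousOn (fun x => gg F i j x) (Set.Ioi (0:ℝ)) := by
  have hepc : Continuous (fun a : ℝ => (ep i j a : Ω → ℝ)) := by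
    apply continuous_pi
    intro ω
    unfold ep
    by_cases h1 : ω = i
    · simp [h1]
      exact continuous_id
    · by_cases h2 : ω = j
      · simp [h1, h2, Ne.symm hij]
        fun_prop
      · simp [h1, h2]
        exact continuous_const
  have hac : ContinuousOn (fun x : ℝ => x / (1 + x)) (Set.Ioi 0) := by
    apply ContinuousOn.div continuousOn_id (by fun_prop)
    intro x hx
    simp only [Set.mem_Ioi] at hx
    intro h
    linarith
  have hmem : ∀ x ∈ Set.Ioi (0:ℝ), ep i j (x/(1+x)) ∈ {q : Ω → ℝ | IsDist q} := by
    intro x hx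
    simp only [Set.mem_Ioi] at hx
    have h1x : (0:ℝ) < 1 + x := by linarith
    exact ep_isDist hij (by positivity) (by rw [div_le_one h1x]; linarith)
  have hcomp : ContinuousOn (fun x : ℝ => F (ep i j (x/(1+x)))) (Set.Ioi 0) := by
    apply hcontF.comp (hepc.comp_continuousOn hac)
    intro x hx
    exact hmem x hx
  apply ContinuousOn.div
  · exact (continuous_apply i).comp_continuousOn hcomp
  · exact (continuous_apply j).comp_continuousOn hcomp
  · intro x hx
    simp only [Set.mem_Ioi] at hx
    exact ne_of_gt (F_pos F hmapF hposF (hmem x hx) (by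
      rw [ep_apply_j hij]
      have h1x : (0:ℝ) < 1 + x := by linarith
      have : x/(1+x) < 1 := by rw [div_lt_one h1x]; linarith
      linarith))

include hcontF in
/-- Step E : the edge ratio function is linear. -/
lemma gg_linear {x : ℝ} (hx : 0 < x) : gg F i j x = gg F i j 1 * x := by
  have hg1 : 0 < gg F i j 1 := gg_pos F hmapF hposF hij one_pos
  -- the function W(x) - x vanishes on positive rationals and is continuous on Ioi 0
  set W : ℝ → ℝ := fun y => gg F i j y / gg F i j 1 with hW
  have hWrat : ∀ r : ℚ, 0 < r → W (r : ℝ) = (r : ℝ) := by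
    intro r hr
    have hnum : 1 ≤ r.num.toNat := by
      have : 0 < r.num := Rat.num_pos.2 hr
      omega
    have hden : 1 ≤ r.den := r.pos
    have hcast : (r : ℝ) = (r.num.toNat : ℝ) / (r.den : ℝ) := by
      rw [Rat.cast_def]
      congr 1
      have : (0:ℤ) ≤ r.num := le_of_lt (Rat.num_pos.2 hr)
      exact_mod_cast (Int.toNat_of_nonneg this).symm
    rw [hcast]
    exact Wrat F hmapF hposF hmix hij hik hjk hnum hden
  have hWc : ContinuousOn W (Set.Ioi 0) :=
    (gg_cont F hmapF hposF hmix hij hik hjk hcontF).div_const _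
  -- density argument
  have hWx : W x = x := by
    have hca : ContinuousAt W x :=
      hWc.continuousAt (IsOpen.mem_nhds isOpen_Ioi hx)
    -- rational sequence converging to x
    have hseq : ∀ n : ℕ, ∃ r : ℚ, x < (r:ℝ) ∧ (r:ℝ) < x + 1/(n+1) := by
      intro n
      have h : x < x + 1/(n+1) := by
        have : (0:ℝ) < 1/((n:ℝ)+1) := by positivity
        linarith
      obtain ⟨r, hr1, hr2⟩ := exists_rat_btwn h
      exact ⟨r, hr1, hr2⟩
    choose rs hrs1 hrs2 using hseq
    have hrspos : ∀ n, 0 < rs n := by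
      intro n
      have := hrs1 n
      exact_mod_cast lt_trans hx this
    have htend : Filter.Tendsto (fun n => ((rs n : ℝ))) Filter.atTop (nhds x) := by
      apply tendsto_of_tendsto_of_tendsto_of_le_of_le
        (tendsto_const_nhds) ?_ (fun n => le_of_lt (hrs1 n)) (fun n => le_of_lt (hrs2 n))
      have : Filter.Tendsto (fun n : ℕ => 1/((n:ℝ)+1)) Filter.atTop (nhds 0) :=
        tendsto_one_div_add_atTop_nhds_zero_nat
      have h2 := this.const_add x
      simpa using h2
    have hWtend : Filter.Tendsto (fun n => W ((rs n : ℝ))) Filter.atTop (nhds (W x)) :=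
      hca.tendsto.comp htend
    have heq : (fun n => W ((rs n : ℝ))) = fun n => ((rs n : ℝ)) := by
      funext n
      exact hWrat (rs n) (hrspos n)
    rw [heq] at hWtend
    exact tendsto_nhds_unique hWtend htend
  have : gg F i j x / gg F i j 1 = x := hWx
  field_simp at this
  linarith [this]

end Wlemmas

/-- the main structure theorem for the marginal map. -/
theorem keyF (hΩ : 3 ≤ Fintype.card Ω)
    (hmapF : ∀ q, IsDist q → IsDist (F q))
    (hposF : ∀ q, IsDist q → ∀ ω, (F q ω = 0 ↔ q ω = 0))
    (hmix : ∀ q1 q2, IsDist q1 → IsDist q2 → ∀ l : ℝ, 0 < l → l < 1 →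
      ∃ μ, 0 < μ ∧ μ < 1 ∧ ∀ ω, F (fun ω => l * q1 ω + (1-l) * q2 ω) ω
        = μ * F q1 ω + (1-μ) * F q2 ω)
    (hcontF : ContinuousOn F {q | IsDist q}) :
    ∃ ψ : Ω → ℝ, (∀ ω, 0 < ψ ω) ∧ ∀ q, IsDist q → ∀ ω,
      F q ω = ψ ω * q ω / ∑ ω', ψ ω' * q ω' := by
  have hcard0 : 0 < Fintype.card Ω := by omega
  have hcardR : (0:ℝ) < (Fintype.card Ω : ℝ) := by exact_mod_cast hcard0
  set u : Ω → ℝ := fun _ => 1/(Fintype.card Ω : ℝ) with hu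
  have huc : ∀ ω, 0 < u ω := fun ω => by rw [hu]; positivity
  have hud : IsDist u := by
    constructor
    · intro ω; exact le_of_lt (huc ω)
    · rw [hu]
      rw [Finset.sum_const, Finset.card_univ, nsmul_eq_mul]
      field_simp
  set ψ : Ω → ℝ := F u with hψdef
  have hψ : ∀ ω, 0 < ψ ω := fun ω => F_pos F hmapF hposF hud (huc ω)
  -- a third element
  have hthird : ∀ i j : Ω, ∃ k, k ≠ i ∧ k ≠ j := by
    intro i j
    have h2 : ({i,j} : Finset Ω).card ≤ 2 :=
      (Finset.card_insert_le _ _).trans (by simp)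
    have hne : ({i,j} : Finset Ω) ≠ univ := by
      intro h
      rw [h, Finset.card_univ] at h2
      omega
    obtain ⟨k, _, hk⟩ := Finset.exists_of_ssubset (Finset.ssubset_univ_iff.2 hne)
    simp only [Finset.mem_insert, Finset.mem_singleton, not_or] at hk
    exact ⟨k, hk.1, hk.2⟩
  -- value of gg at 1
  have hgg1 : ∀ i j : Ω, i ≠ j → gg F i j 1 = ψ i / ψ j := by
    intro i j hij
    obtain ⟨k, hki, hkj⟩ := hthird i j
    have h := stepA F hmapF hposF hmix hud hij (huc i) (huc j)
      (isDist_sum_pair_lt hud (Ne.symm hki) (Ne.symm hkj) hij (huc k))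
    have huij : u i / u j = 1 := by rw [hu]; field_simp
    rw [huij] at h
    exact h.symm
  -- interior equation
  have hint : ∀ q, IsDist q → (∀ ω, 0 < q ω) → ∀ i,
      F q i * (∑ ω, ψ ω * q ω) = ψ i * q i := by
    intro q hq hqpos i
    have hpair : ∀ j, F q i * (ψ j * q j) = F q j * (ψ i * q i) := by
      intro j
      by_cases hij : i = j
      · subst hij; ring
      · obtain ⟨k, hki, hkj⟩ := hthird i j
        have hlt : q i + q j < 1 :=
          isDist_sum_pair_lt hq (Ne.symm hki) (Ne.symm hkj) hij (hqpos k)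
        have h := stepA F hmapF hposF hmix hq hij (hqpos i) (hqpos j) hlt
        have hx : 0 < q i / q j := div_pos (hqpos i) (hqpos j)
        rw [gg_linear F hmapF hposF hmix hij (Ne.symm hki) (Ne.symm hkj) hcontF hx,
          hgg1 i j hij] at h
        have hFqj : 0 < F q j := F_pos F hmapF hposF hq (hqpos j)
        rw [div_eq_iff (ne_of_gt hFqj)] at h
        field_simp at h
        have hne : ψ j * q j ≠ 0 := ne_of_gt (mul_pos (hψ j) (hqpos j))
        rw [eq_div_iff hne] at h
        linear_combination h
    calc F q i * (∑ ω, ψ ω * q ω) = ∑ ω, F q i * (ψ ω * q ω) := Finset.mul_sum _ _ _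
      _ = ∑ ω, F q ω * (ψ i * q i) := Finset.sum_congr rfl (fun ω _ => hpair ω)
      _ = (∑ ω, F q ω) * (ψ i * q i) := by rw [← Finset.sum_mul]
      _ = ψ i * q i := by rw [(hmapF q hq).2, one_mul]
  -- extension to the boundary by continuity
  have hall : ∀ q, IsDist q → ∀ i, F q i * (∑ ω, ψ ω * q ω) = ψ i * q i := by
    intro q hq i
    set e : ℕ → ℝ := fun n => 1/((n:ℝ)+2) with he
    have he0 : ∀ n, 0 < e n := fun n => by rw [he]; positivity
    have he1 : ∀ n, e n < 1 := by
      intro n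
      rw [he, div_lt_one (by positivity)]
      have : (0:ℝ) ≤ n := Nat.cast_nonneg n
      linarith
    have hetend : Filter.Tendsto e Filter.atTop (nhds 0) := by
      apply tendsto_of_tendsto_of_tendsto_of_le_of_le (g := fun _ : ℕ => (0:ℝ))
        (h := fun n : ℕ => 1/((n:ℝ)+1)) tendsto_const_nhds
        tendsto_one_div_add_atTop_nhds_zero_nat
      · intro n; exact le_of_lt (he0 n)
      · intro n
        rw [he]
        apply div_le_div_of_nonneg_left (by norm_num) (by positivity)
        have : (0:ℝ) ≤ n := Nat.cast_nonneg n
        linarith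
    set qs : ℕ → Ω → ℝ := fun n ω => (1 - e n) * q ω + e n * u ω with hqs
    have hqsd : ∀ n, IsDist (qs n) := by
      intro n
      constructor
      · intro ω
        have h1 := hq.1 ω
        have h2 := le_of_lt (huc ω)
        have h3 := he0 n
        have h4 := he1 n
        have hval : qs n ω = (1 - e n) * q ω + e n * u ω := rfl
        rw [hval]
        have h5 : (0:ℝ) ≤ 1 - e n := by linarith
        have h6 := mul_nonneg h5 h1
        have h7 := mul_pos h3 (huc ω)
        linarith
      · rw [hqs]
        simp only
        rw [Finset.sum_add_distrib, ← Finset.mul_sum, ← Finset.mul_sum, hq.2, hud.2]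
        ring
    have hqspos : ∀ n ω, 0 < qs n ω := by
      intro n ω
      have h1 := hq.1 ω
      have h2 := huc ω
      have h3 := he0 n
      have h4 := he1 n
      rw [hqs]
      have ha : (0:ℝ) ≤ (1 - e n) * q ω := by
        apply mul_nonneg (by linarith) h1
      have hb : 0 < e n * u ω := mul_pos h3 h2
      simp only
      linarith
    have hco : ∀ ω, Filter.Tendsto (fun n => qs n ω) Filter.atTop (nhds (q ω)) := by
      intro ω
      have heq : (fun n => qs n ω) = fun n => q ω + e n * (u ω - q ω) := by
        funext n; rw [hqs]; ring
      rw [heq]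
      have h2 : Filter.Tendsto (fun n => e n * (u ω - q ω)) Filter.atTop (nhds 0) := by
        have := hetend.mul_const (u ω - q ω)
        rwa [zero_mul] at this
      have h3 := h2.const_add (q ω)
      rwa [add_zero] at h3
    have htendq : Filter.Tendsto qs Filter.atTop (nhds q) := by
      rw [tendsto_pi_nhds]
      exact hco
    have htendqW : Filter.Tendsto qs Filter.atTop (nhdsWithin q {p : Ω → ℝ | IsDist p}) := by
      rw [tendsto_nhdsWithin_iff]
      exact ⟨htendq, Filter.Eventually.of_forall (fun n => hqsd n)⟩
    have hFq : Filter.Tendsto (fun n => F (qs n) i) Filter.atTop (nhds (F q i)) := by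
      have h2 := (hcontF q hq).tendsto.comp htendqW
      exact ((continuous_apply i).tendsto (F q)).comp h2
    have hsumt : Filter.Tendsto (fun n => ∑ ω, ψ ω * qs n ω) Filter.atTop
        (nhds (∑ ω, ψ ω * q ω)) := by
      apply tendsto_finset_sum
      intro ω _
      exact (hco ω).const_mul (ψ ω)
    have hlhs := hFq.mul hsumt
    have hrhs : Filter.Tendsto (fun n => ψ i * qs n i) Filter.atTop (nhds (ψ i * q i)) :=
      (hco i).const_mul (ψ i)
    have heq : (fun n => F (qs n) i * (∑ ω, ψ ω * qs n ω)) = fun n => ψ i * qs n i := by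
      funext n
      exact hint (qs n) (hqsd n) (hqspos n) i
    rw [heq] at hlhs
    exact tendsto_nhds_unique hlhs hrhs
  refine ⟨ψ, hψ, ?_⟩
  intro q hq ω
  have hsum : 0 < ∑ ω', ψ ω' * q ω' := by
    have hex : ∃ ω0, 0 < q ω0 := by
      by_contra h
      push_neg at h
      have : ∀ ω0, q ω0 = 0 := fun ω0 => le_antisymm (h ω0) (hq.1 ω0)
      have hs : ∑ ω0, q ω0 = 0 := Finset.sum_eq_zero (fun ω0 _ => this ω0)
      rw [hq.2] at hs
      norm_num at hs
    obtain ⟨ω0, hω0⟩ := hex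
    apply Finset.sum_pos'
    · intro ω' _
      exact mul_nonneg (le_of_lt (hψ ω')) (hq.1 ω')
    · exact ⟨ω0, Finset.mem_univ ω0, mul_pos (hψ ω0) hω0⟩
  rw [eq_div_iff (ne_of_gt hsum)]
  exact hall q hq ω

section Joint

variable {Ω Θ : Type*} [Fintype Ω] [Fintype Θ] [DecidableEq Θ]

lemma sum_two {θ1 θ2 : Θ} (h : θ1 ≠ θ2) (a b : ℝ) :
    ∑ θ, (if θ = θ1 then a else if θ = θ2 then b else 0) = a + b := by
  have : ∀ θ : Θ, (if θ = θ1 then a else if θ = θ2 then b else 0)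
      = (if θ = θ1 then a else 0) + (if θ = θ2 then b else 0) := by
    intro θ
    by_cases h1 : θ = θ1 <;> by_cases h2 : θ = θ2 <;> simp_all
  rw [Finset.sum_congr rfl (fun θ _ => this θ), Finset.sum_add_distrib]
  simp [Finset.sum_ite_eq']

/-- embed a distribution on `Ω` as a joint distribution concentrated on signal `θ0`. -/
def liftJ (θ0 : Θ) (q : Ω → ℝ) : Ω × Θ → ℝ := fun x => if x.2 = θ0 then q x.1 else 0

lemma liftJ_marg (θ0 : Θ) (q : Ω → ℝ) (ω : Ω) : ∑ θ, liftJ θ0 q (ω, θ) = q ω := by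
  simp [liftJ, Finset.sum_ite_eq']

lemma liftJ_isDist (θ0 : Θ) {q : Ω → ℝ} (hq : IsDist q) : IsDist (liftJ θ0 q) := by
  constructor
  · intro x
    unfold liftJ
    split_ifs
    · exact hq.1 x.1
    · exact le_refl 0
  · rw [Fintype.sum_prod_type]
    calc ∑ ω, ∑ θ, liftJ θ0 q (ω, θ) = ∑ ω, q ω :=
          Finset.sum_congr rfl (fun ω _ => liftJ_marg θ0 q ω)
      _ = 1 := hq.2

variable (φ : (Ω × Θ → ℝ) → Ω × Θ → ℝ)

/-- the induced marginal map. -/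
noncomputable def Fm (θ0 : Θ) (q : Ω → ℝ) : Ω → ℝ := fun ω => ∑ θ, φ (liftJ θ0 q) (ω, θ)

variable (θ0 : Θ)
  (hmap : ∀ p, IsDist p → IsDist (φ p))
  (hpos : ∀ p, IsDist p → ∀ A : Finset (Ω × Θ), (∑ x ∈ A, φ p x = 0 ↔ ∑ x ∈ A, p x = 0))
  (hmarg : ∀ p p', IsDist p → IsDist p' →
    (∀ ω : Ω, ∑ θ, p (ω, θ) = ∑ θ, p' (ω, θ)) →
    ∀ ω : Ω, ∑ θ, φ p (ω, θ) = ∑ θ, φ p' (ω, θ))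

include hmap hpos in
lemma phi_point_zero {p : Ω × Θ → ℝ} (hp : IsDist p) {x : Ω × Θ} (hx : p x = 0) :
    φ p x = 0 := by
  have := hpos p hp {x}
  rw [Finset.sum_singleton, Finset.sum_singleton] at this
  exact this.2 hx

include hmap hpos in
lemma phi_signal_pos {p : Ω × Θ → ℝ} (hp : IsDist p) {θ : Θ}
    (h : 0 < ∑ ω, p (ω, θ)) : 0 < ∑ ω, φ p (ω, θ) := by
  have hA : ∀ f : Ω × Θ → ℝ, ∑ x ∈ Finset.univ ×ˢ {θ}, f x = ∑ ω, f (ω, θ) := by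
    intro f
    rw [Finset.sum_product]
    simp
  have hiff := hpos p hp (Finset.univ ×ˢ {θ})
  rw [hA, hA] at hiff
  have hnn : 0 ≤ ∑ ω, φ p (ω, θ) :=
    Finset.sum_nonneg (fun ω _ => (hmap p hp).1 (ω, θ))
  rcases lt_or_eq_of_le hnn with h' | h'
  · exact h'
  · exact absurd (hiff.1 h'.symm) (by linarith)

include hmarg hmap in
/-- the marginal of `φ p` only depends on the marginal of `p` : it is `Fm`. -/
lemma phi_marg_eq {p : Ω × Θ → ℝ} (hp : IsDist p) (ω : Ω) :
    ∑ θ, φ p (ω, θ) = Fm φ θ0 (fun ω' => ∑ θ, p (ω', θ)) ω := by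
  set q : Ω → ℝ := fun ω' => ∑ θ, p (ω', θ) with hq
  have hqd : IsDist q := by
    constructor
    · intro ω'
      exact Finset.sum_nonneg (fun θ _ => hp.1 (ω', θ))
    · rw [hq, ← Fintype.sum_prod_type, hp.2]
  have hld : IsDist (liftJ θ0 q) := liftJ_isDist θ0 hqd
  exact hmarg p (liftJ θ0 q) hp hld (fun ω' => (liftJ_marg θ0 q ω').symm) ω

include hmap hmarg in
lemma Fm_isDist {q : Ω → ℝ} (hq : IsDist q) : IsDist (Fm φ θ0 q) := by
  have hld : IsDist (liftJ θ0 q) := liftJ_isDist θ0 hq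
  constructor
  · intro ω
    exact Finset.sum_nonneg (fun θ _ => (hmap _ hld).1 (ω, θ))
  · rw [show (Fm φ θ0 q) = fun ω => ∑ θ, φ (liftJ θ0 q) (ω, θ) from rfl,
      ← Fintype.sum_prod_type, (hmap _ hld).2]

include hmap hpos in
lemma Fm_posF {q : Ω → ℝ} (hq : IsDist q) (ω : Ω) : (Fm φ θ0 q ω = 0 ↔ q ω = 0) := by
  have hld : IsDist (liftJ θ0 q) := liftJ_isDist θ0 hq
  have hA : ∀ f : Ω × Θ → ℝ, ∑ x ∈ ({ω} ×ˢ Finset.univ : Finset (Ω × Θ)), f x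
      = ∑ θ, f (ω, θ) := by
    intro f
    rw [Finset.sum_product]
    simp
  have hiff := hpos (liftJ θ0 q) hld ({ω} ×ˢ Finset.univ)
  rw [hA, hA] at hiff
  rw [show Fm φ θ0 q ω = ∑ θ, φ (liftJ θ0 q) (ω, θ) from rfl]
  rw [hiff]
  rw [liftJ_marg]

include hmap hpos hmarg in
lemma Fm_mixF
    (hcoh : ∀ p, IsDist p → ∀ θ : Θ, 0 < ∑ ω, p (ω, θ) →
      φ (condSignal p θ) = condSignal (φ p) θ)
    {θ1 θ2 : Θ} (hθ : θ1 ≠ θ2) :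
    ∀ q1 q2 : Ω → ℝ, IsDist q1 → IsDist q2 → ∀ l : ℝ, 0 < l → l < 1 →
      ∃ μ, 0 < μ ∧ μ < 1 ∧ ∀ ω, Fm φ θ0 (fun ω' => l * q1 ω' + (1-l) * q2 ω') ω
        = μ * Fm φ θ0 q1 ω + (1-μ) * Fm φ θ0 q2 ω := by
  intro q1 q2 hq1 hq2 l hl0 hl1
  set p : Ω × Θ → ℝ := fun x =>
    if x.2 = θ1 then l * q1 x.1 else if x.2 = θ2 then (1-l) * q2 x.1 else 0 with hpdef
  have hpval : ∀ ω θ, p (ω, θ) = if θ = θ1 then l * q1 ω else if θ = θ2 then (1-l) * q2 ω else 0 :=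
    fun ω θ => rfl
  have hmargp : ∀ ω, ∑ θ, p (ω, θ) = l * q1 ω + (1-l) * q2 ω := by
    intro ω
    rw [Finset.sum_congr rfl (fun θ _ => hpval ω θ)]
    exact sum_two hθ _ _
  have hpd : IsDist p := by
    constructor
    · intro x
      rw [hpdef]
      dsimp only
      split_ifs
      · exact mul_nonneg (le_of_lt hl0) (hq1.1 x.1)
      · exact mul_nonneg (by linarith) (hq2.1 x.1)
      · exact le_refl 0
    · rw [Fintype.sum_prod_type]
      rw [Finset.sum_congr rfl (fun ω _ => hmargp ω)]
      rw [Finset.sum_add_distrib, ← Finset.mul_sum, ← Finset.mul_sum, hq1.2, hq2.2]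
      ring
  have hS1 : ∑ ω, p (ω, θ1) = l := by
    have : ∀ ω : Ω, p (ω, θ1) = l * q1 ω := by
      intro ω; rw [hpval]; simp
    rw [Finset.sum_congr rfl (fun ω _ => this ω), ← Finset.mul_sum, hq1.2, mul_one]
  have hS2 : ∑ ω, p (ω, θ2) = 1 - l := by
    have : ∀ ω : Ω, p (ω, θ2) = (1-l) * q2 ω := by
      intro ω; rw [hpval]; simp [Ne.symm hθ]
    rw [Finset.sum_congr rfl (fun ω _ => this ω), ← Finset.mul_sum, hq2.2, mul_one]
  have hc1 : condSignal p θ1 = liftJ θ1 q1 := by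
    funext x
    unfold condSignal liftJ
    by_cases h : x.2 = θ1
    · rw [if_pos h, if_pos h, hS1]
      have : p x = l * q1 x.1 := by
        rw [hpdef]; dsimp only; rw [if_pos h]
      rw [this, mul_comm, mul_div_assoc, div_self (ne_of_gt hl0), mul_one]
    · rw [if_neg h, if_neg h]
  have hc2 : condSignal p θ2 = liftJ θ2 q2 := by
    funext x
    unfold condSignal liftJ
    by_cases h : x.2 = θ2
    · rw [if_pos h, if_pos h, hS2]
      have : p x = (1-l) * q2 x.1 := by
        rw [hpdef]; dsimp only; rw [if_neg (by rw [h]; exact Ne.symm hθ), if_pos h]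
      rw [this, mul_comm, mul_div_assoc, div_self (by linarith : (1:ℝ) - l ≠ 0), mul_one]
    · rw [if_neg h, if_neg h]
  have hp1pos : 0 < ∑ ω, p (ω, θ1) := by rw [hS1]; exact hl0
  have hp2pos : 0 < ∑ ω, p (ω, θ2) := by rw [hS2]; linarith
  have hcoh1 := hcoh p hpd θ1 hp1pos
  have hcoh2 := hcoh p hpd θ2 hp2pos
  rw [hc1] at hcoh1
  rw [hc2] at hcoh2
  set S1 := ∑ ω, φ p (ω, θ1) with hS1'
  set S2 := ∑ ω, φ p (ω, θ2) with hS2'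
  have hS1pos : 0 < S1 := phi_signal_pos φ hmap hpos hpd hp1pos
  have hS2pos : 0 < S2 := phi_signal_pos φ hmap hpos hpd hp2pos
  -- marginal of the conditional
  have hcondmarg : ∀ (θ' : Θ) (S : ℝ), S = ∑ ω', φ p (ω', θ') → ∀ ω,
      ∑ θ, condSignal (φ p) θ' (ω, θ) = φ p (ω, θ') / S := by
    intro θ' S hS ω
    unfold condSignal
    rw [← hS]
    simp only
    rw [Finset.sum_ite_eq' Finset.univ θ' (fun θ => φ p (ω, θ) / S)]
    simp
  have hFm1 : ∀ ω, φ p (ω, θ1) = S1 * Fm φ θ0 q1 ω := by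
    intro ω
    have hmargl : (fun ω' => ∑ θ, liftJ θ1 q1 (ω', θ)) = q1 := by
      funext ω'; exact liftJ_marg θ1 q1 ω'
    have h1 := phi_marg_eq φ θ0 hmap hmarg (liftJ_isDist θ1 hq1) ω
    rw [hmargl] at h1
    rw [hcoh1] at h1
    rw [hcondmarg θ1 S1 hS1' ω] at h1
    rw [← h1, mul_div_assoc']
    rw [mul_comm, mul_div_assoc, div_self (ne_of_gt hS1pos), mul_one]
  have hFm2 : ∀ ω, φ p (ω, θ2) = S2 * Fm φ θ0 q2 ω := by
    intro ω
    have hmargl : (fun ω' => ∑ θ, liftJ θ2 q2 (ω', θ)) = q2 := by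
      funext ω'; exact liftJ_marg θ2 q2 ω'
    have h1 := phi_marg_eq φ θ0 hmap hmarg (liftJ_isDist θ2 hq2) ω
    rw [hmargl] at h1
    rw [hcoh2] at h1
    rw [hcondmarg θ2 S2 hS2' ω] at h1
    rw [← h1]
    field_simp
  have hzero : ∀ ω θ, θ ≠ θ1 → θ ≠ θ2 → φ p (ω, θ) = 0 := by
    intro ω θ h1 h2
    apply phi_point_zero φ hmap hpos hpd
    rw [hpval, if_neg h1, if_neg h2]
  have hmain : ∀ ω, Fm φ θ0 (fun ω' => l * q1 ω' + (1-l) * q2 ω') ω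
      = S1 * Fm φ θ0 q1 ω + S2 * Fm φ θ0 q2 ω := by
    intro ω
    have h1 := phi_marg_eq φ θ0 hmap hmarg hpd ω
    have h2 : (fun ω' => ∑ θ, p (ω', θ)) = fun ω' => l * q1 ω' + (1-l) * q2 ω' := by
      funext ω'; exact hmargp ω'
    rw [h2] at h1
    rw [← h1]
    have h3 : ∀ θ, φ p (ω, θ)
        = if θ = θ1 then φ p (ω, θ1) else if θ = θ2 then φ p (ω, θ2) else 0 := by
      intro θ
      by_cases ha : θ = θ1
      · rw [if_pos ha, ha]
      · by_cases hb : θ = θ2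
        · rw [if_neg ha, if_pos hb, hb]
        · rw [if_neg ha, if_neg hb]
          exact hzero ω θ ha hb
    rw [Finset.sum_congr rfl (fun θ _ => h3 θ), sum_two hθ, hFm1 ω, hFm2 ω]
  have hq1Fd : IsDist (Fm φ θ0 q1) := Fm_isDist φ θ0 hmap hmarg hq1
  have hq2Fd : IsDist (Fm φ θ0 q2) := Fm_isDist φ θ0 hmap hmarg hq2
  have hmixd : IsDist (fun ω' => l * q1 ω' + (1-l) * q2 ω') := by
    constructor
    · intro ω'
      have := hq1.1 ω'; have := hq2.1 ω'
      have h1 : 0 ≤ l * q1 ω' := mul_nonneg (le_of_lt hl0) (hq1.1 ω')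
      have h2 : 0 ≤ (1-l) * q2 ω' := mul_nonneg (by linarith) (hq2.1 ω')
      show 0 ≤ l * q1 ω' + (1-l) * q2 ω'
      linarith
    · rw [Finset.sum_add_distrib, ← Finset.mul_sum, ← Finset.mul_sum, hq1.2, hq2.2]
      ring
  have hsum1 : S1 + S2 = 1 := by
    have h1 : ∑ ω, Fm φ θ0 (fun ω' => l * q1 ω' + (1-l) * q2 ω') ω = 1 :=
      (Fm_isDist φ θ0 hmap hmarg hmixd).2
    rw [Finset.sum_congr rfl (fun ω _ => hmain ω), Finset.sum_add_distrib,
      ← Finset.mul_sum, ← Finset.mul_sum, hq1Fd.2, hq2Fd.2] at h1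
    linarith
  refine ⟨S1, hS1pos, by linarith, ?_⟩
  intro ω
  rw [hmain ω]
  have : (1 : ℝ) - S1 = S2 := by linarith
  rw [this]

include hmap in
lemma Fm_contF (hcont : ContinuousOn φ {p : Ω × Θ → ℝ | IsDist p}) :
    ContinuousOn (Fm φ θ0) {q : Ω → ℝ | IsDist q} := by
  have hliftc : Continuous (liftJ θ0 : (Ω → ℝ) → Ω × Θ → ℝ) := by
    apply continuous_pi
    intro x
    unfold liftJ
    by_cases h : x.2 = θ0
    · simp only [h, if_pos rfl]
      exact continuous_apply x.1
    · simp only [h, if_neg h]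
      exact continuous_const
  have hmaps : Set.MapsTo (liftJ θ0) {q : Ω → ℝ | IsDist q} {p : Ω × Θ → ℝ | IsDist p} :=
    fun q hq => liftJ_isDist θ0 hq
  have h1 : ContinuousOn (fun q => φ (liftJ θ0 q)) {q : Ω → ℝ | IsDist q} :=
    hcont.comp hliftc.continuousOn hmaps
  rw [continuousOn_pi]
  intro ω
  apply continuousOn_finset_sum
  intro θ _
  exact (continuous_apply (ω, θ)).comp_continuousOn h1

lemma condSignal_marg (g : Ω × Θ → ℝ) (θ : Θ) (ω : Ω) :
    ∑ θ', condSignal g θ (ω, θ') = g (ω, θ) / ∑ ω', g (ω', θ) := by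
  unfold condSignal
  simp only
  rw [Finset.sum_ite_eq' Finset.univ θ (fun θ' => g (ω, θ') / ∑ ω', g (ω', θ))]
  simp

lemma condSignal_isDist {p : Ω × Θ → ℝ} (hp : IsDist p) {θ : Θ}
    (h : 0 < ∑ ω, p (ω, θ)) : IsDist (condSignal p θ) := by
  constructor
  · intro x
    unfold condSignal
    split_ifs
    · exact div_nonneg (hp.1 x) (le_of_lt h)
    · exact le_refl 0
  · rw [Fintype.sum_prod_type]
    rw [Finset.sum_congr rfl (fun ω _ => condSignal_marg p θ ω), ← Finset.sum_div,
      div_self (ne_of_gt h)]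

lemma marg_isDist {p : Ω × Θ → ℝ} (hp : IsDist p) :
    IsDist (fun ω => ∑ θ, p (ω, θ)) := by
  constructor
  · intro ω
    exact Finset.sum_nonneg (fun θ _ => hp.1 (ω, θ))
  · rw [← Fintype.sum_prod_type, hp.2]

end Joint

end Simplex

/-- **Theorem (first part)**: if `|Ω| ≥ 3`, `|Θ| ≥ 2` and `φ` satisfies positivity,
continuity, weak signal coherence and marginality, then there is `ψ : Ω → ℝ₊₊` such
that (i) the induced marginal distortion is weighted with weights `ψ`, and (ii) the
conditional-on-`θ` distortion is weighted with weights `ψ` whenever `p(θ) > 0`. -/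
theorem stmt8 {Ω Θ : Type*} [Fintype Ω] [Fintype Θ] [DecidableEq Θ]
    (hΩ : 3 ≤ Fintype.card Ω) (hΘ : 2 ≤ Fintype.card Θ)
    (φ : (Ω × Θ → ℝ) → Ω × Θ → ℝ)
    (hmap : ∀ p, IsDist p → IsDist (φ p))
    (hpos : PositiveJoint φ)
    (hcont : ContinuousOn φ {p | IsDist p})
    (hcoh : WeakSignalCoherent φ)
    (hmarg : Marginality φ) :
    ∃ ψ : Ω → ℝ, (∀ ω, 0 < ψ ω) ∧
      (∀ p, IsDist p → ∀ ω : Ω,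
        ∑ θ, φ p (ω, θ) =
          ψ ω * (∑ θ, p (ω, θ)) / ∑ ω', ψ ω' * ∑ θ, p (ω', θ)) ∧
      (∀ p, IsDist p → ∀ θ : Θ, 0 < ∑ ω, p (ω, θ) → ∀ ω : Ω,
        φ p (ω, θ) / (∑ ω', φ p (ω', θ)) =
          ψ ω * p (ω, θ) / ∑ ω', ψ ω' * p (ω', θ)) := by
  letI : DecidableEq Ω := Classical.decEq Ω
  obtain ⟨θ1, θ2, hθ⟩ := Fintype.exists_pair_of_one_lt_card (by omega : 1 < Fintype.card Θ)
  set θ0 := θ1 with hθ0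
  have hposA : ∀ p, IsDist p → ∀ A : Finset (Ω × Θ),
      (∑ x ∈ A, φ p x = 0 ↔ ∑ x ∈ A, p x = 0) := hpos
  have hmargA : ∀ p p', IsDist p → IsDist p' →
      (∀ ω : Ω, ∑ θ, p (ω, θ) = ∑ θ, p' (ω, θ)) →
      ∀ ω : Ω, ∑ θ, φ p (ω, θ) = ∑ θ, φ p' (ω, θ) := hmarg
  have hcohA : ∀ p, IsDist p → ∀ θ : Θ, 0 < ∑ ω, p (ω, θ) →
      φ (condSignal p θ) = condSignal (φ p) θ := hcoh
  have hmapF : ∀ q : Ω → ℝ, IsDist q → IsDist (Fm φ θ0 q) :=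
    fun q hq => Fm_isDist φ θ0 hmap hmargA hq
  have hposF : ∀ q : Ω → ℝ, IsDist q → ∀ ω, (Fm φ θ0 q ω = 0 ↔ q ω = 0) :=
    fun q hq ω => Fm_posF φ θ0 hmap hposA hq ω
  have hmixF := Fm_mixF φ θ0 hmap hposA hmargA hcohA hθ
  have hcontF := Fm_contF φ θ0 hmap hcont
  obtain ⟨ψ, hψ, hform⟩ := keyF (Fm φ θ0) hΩ hmapF hposF hmixF hcontF
  refine ⟨ψ, hψ, ?_, ?_⟩
  · intro p hp ω
    have h1 := phi_marg_eq φ θ0 hmap hmargA hp ω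
    rw [h1, hform _ (marg_isDist hp) ω]
  · intro p hp θ hθp ω
    have hSφ : 0 < ∑ ω', φ p (ω', θ) := phi_signal_pos φ hmap hposA hp hθp
    have hp'd : IsDist (condSignal p θ) := condSignal_isDist hp hθp
    have hc := hcohA p hp θ hθp
    have h1 := phi_marg_eq φ θ0 hmap hmargA hp'd ω
    rw [hc, condSignal_marg (φ p) θ ω] at h1
    have hmargc : (fun ω' => ∑ θ', condSignal p θ (ω', θ'))
        = fun ω' => p (ω', θ) / ∑ ω'', p (ω'', θ) := by
      funext ω'
      exact condSignal_marg p θ ω'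
    rw [hmargc] at h1
    rw [hform _ ?_ ω] at h1
    swap
    · rw [← hmargc]
      exact marg_isDist hp'd
    -- h1 : φ p (ω,θ) / Sφ = ψ ω * (p (ω,θ)/S) / ∑ ω', ψ ω' * (p (ω',θ)/S)
    rw [h1]
    have hS := hθp
    set S := ∑ ω'', p (ω'', θ) with hSdef
    have hsimp : ∑ ω', ψ ω' * (p (ω', θ) / S) = (∑ ω', ψ ω' * p (ω', θ)) / S := by
      rw [Finset.sum_div]
      apply Finset.sum_congr rfl
      intro ω' _
      rw [mul_div_assoc]
    rw [hsimp]
    have hden : 0 < ∑ ω', ψ ω' * p (ω', θ) := by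
      have hex : ∃ ω0, 0 < p (ω0, θ) := by
        by_contra h
        push_neg at h
        have hz : ∀ ω0, p (ω0, θ) = 0 := fun ω0 => le_antisymm (h ω0) (hp.1 (ω0, θ))
        have : S = 0 := Finset.sum_eq_zero (fun ω0 _ => hz ω0)
        rw [this] at hS
        norm_num at hS
      obtain ⟨ω0, hω0⟩ := hex
      apply Finset.sum_pos'
      · intro ω' _
        exact mul_nonneg (le_of_lt (hψ ω')) (hp.1 (ω', θ))
      · exact ⟨ω0, Finset.mem_univ ω0, mul_pos (hψ ω0) hω0⟩
    rw [mul_div_assoc', div_div_div_cancel_right₀]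
    exact ne_of_gt hS
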